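/- arXiv:1809.01136 — 6 statements merged into one kernel-verified Lean document; each statement's English description precedes it below -/
import Mathlib

section
/- For a finite simple graph G, equality ζ(G) = ε(Ḡ) holds if and only if G is a complete graph (in which case both sides are 0). -/
open SimpleGraph

/-- A proper vertex colouring of `G` using exactly `χ(G)` colours. -/
def IsChromaticColoring {V : Type*} (G : SimpleGraph V) (c : V → ℕ) : Prop :=
  (∀ u v, G.Adj u v → c u ≠ c v) ∧ ((Set.range c).ncard : ℕ∞) = G.chromaticNumber

/-- The set of chromatic completion edges for a colouring `c`: unordered pairs of
distinct non-adjacent vertices with different colours. -/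
def completionEdges {V : Type*} (G : SimpleGraph V) (c : V → ℕ) : Set (Sym2 V) :=
  {e | ∃ u v, e = s(u, v) ∧ u ≠ v ∧ ¬ G.Adj u v ∧ c u ≠ c v}

/-- The chromatic completion number `ζ(G)`. -/
noncomputable def zeta {V : Type*} (G : SimpleGraph V) : ℕ :=
  sSup {m | ∃ c : V → ℕ, IsChromaticColoring G c ∧ m = (completionEdges G c).ncard}

lemma completionEdges_subset {V : Type*} (G : SimpleGraph V) (c : V → ℕ) :
    completionEdges G c ⊆ Gᶜ.edgeSet := by
  rintro e ⟨u, v, rfl, huv, hnadj, -⟩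
  simp only [mem_edgeSet, compl_adj]
  exact ⟨huv, hnadj⟩

/-- If `G` is not complete, a chromatic colouring cannot be injective. -/
lemma not_injective_of_isChromaticColoring {V : Type*} [Fintype V] (G : SimpleGraph V)
    (hG : G ≠ ⊤) (c : V → ℕ) (hc : IsChromaticColoring G c) : ¬ Function.Injective c := by
  intro hinj
  -- there is a non-adjacent pair of distinct vertices
  have hex : ∃ x y, x ≠ y ∧ ¬ G.Adj x y := by
    by_contra h
    push_neg at h
    apply hG
    ext x y
    simp only [top_adj]
    exact ⟨fun h' => h'.ne, fun h' => h x y h'⟩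
  obtain ⟨x, y, hxy, hnadj⟩ := hex
  -- the chromatic number equals the number of vertices
  have hrange : (Set.range c).ncard = Fintype.card V := by
    rw [← Set.image_univ, Set.ncard_image_of_injective _ hinj, Set.ncard_univ, Nat.card_eq_fintype_card]
  have hχ : G.chromaticNumber = (Fintype.card V : ℕ∞) := by
    rw [← hc.2, hrange]
  -- but `G` is colourable with fewer colours
  classical
  have hcol : G.Coloring {v : V // v ≠ y} := by
    refine SimpleGraph.Coloring.mk
      (fun v => if h : v = y then ⟨x, hxy⟩ else ⟨v, h⟩) ?_
    intro a b hab
    by_cases ha : a = y <;> by_cases hb : b = y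
    · exact absurd (ha ▸ hb ▸ hab) (G.irrefl)
    · simp only [ha, dif_pos, dif_neg hb, ne_eq, Subtype.mk.injEq]
      intro hxb
      exact hnadj (hxb ▸ (ha ▸ hab).symm)
    · simp only [hb, dif_pos, dif_neg ha, ne_eq, Subtype.mk.injEq]
      intro hax
      exact hnadj (hax ▸ (hb ▸ hab))
    · simp only [dif_neg ha, dif_neg hb, ne_eq, Subtype.mk.injEq]
      exact hab.ne
  have h1 : G.chromaticNumber ≤ (Fintype.card {v : V // v ≠ y} : ℕ∞) :=
    (SimpleGraph.Coloring.colorable hcol).chromaticNumber_le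
  have h2 : Fintype.card {v : V // v ≠ y} < Fintype.card V :=
    Fintype.card_subtype_lt (x := y) (by simp)
  rw [hχ, Nat.cast_le] at h1
  exact absurd h1 (not_le.mpr h2)

/-- If `G` is not complete, every chromatic completion count is strictly below `ε(Ḡ)`. -/
lemma completion_lt {V : Type*} [Fintype V] (G : SimpleGraph V) (hG : G ≠ ⊤)
    (c : V → ℕ) (hc : IsChromaticColoring G c) :
    (completionEdges G c).ncard < Gᶜ.edgeSet.ncard := by
  classical
  have hninj := not_injective_of_isChromaticColoring G hG c hc
  rw [Function.not_injective_iff] at hninj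
  obtain ⟨u, v, hcuv, huv⟩ := hninj
  have hnadj : ¬ G.Adj u v := fun h => hc.1 u v h hcuv
  have hmem : s(u, v) ∈ Gᶜ.edgeSet := by
    simp only [mem_edgeSet, compl_adj]
    exact ⟨huv, hnadj⟩
  have hnotmem : s(u, v) ∉ completionEdges G c := by
    rintro ⟨a, b, hab, -, -, hcab⟩
    rw [Sym2.eq_iff] at hab
    rcases hab with ⟨rfl, rfl⟩ | ⟨rfl, rfl⟩
    · exact hcab hcuv
    · exact hcab hcuv.symm
  refine Set.ncard_lt_ncard ⟨completionEdges_subset G c, fun hsub => ?_⟩ (Set.toFinite _)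
  exact hnotmem (hsub hmem)

/-- $ζ(G) = ε(\bar G)$ holds iff $G$ is complete (in which case both sides are $0$). -/
theorem zeta_eq_card_compl_edges_iff {V : Type*} [Fintype V] [Nonempty V] (G : SimpleGraph V) :
    (zeta G = Gᶜ.edgeSet.ncard ↔ G = ⊤) ∧ (G = ⊤ → zeta G = 0 ∧ Gᶜ.edgeSet.ncard = 0) := by
  classical
  set S : Set ℕ :=
    {m | ∃ c : V → ℕ, IsChromaticColoring G c ∧ m = (completionEdges G c).ncard} with hS
  have htop : G = ⊤ → zeta G = 0 ∧ Gᶜ.edgeSet.ncard = 0 := by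
    intro hGtop
    have hcompl : Gᶜ = ⊥ := by simp [hGtop]
    have hε : Gᶜ.edgeSet.ncard = 0 := by rw [hcompl]; simp
    refine ⟨?_, hε⟩
    have hsub : S ⊆ {0} := by
      rintro m ⟨c, hc, rfl⟩
      have : completionEdges G c ⊆ (∅ : Set (Sym2 V)) := by
        rw [← SimpleGraph.edgeSet_bot, ← hcompl]
        exact completionEdges_subset G c
      simp [Set.subset_empty_iff.mp this]
    rcases Set.subset_singleton_iff_eq.mp hsub with h | h
    · rw [zeta, ← hS, h, csSup_empty]; rfl
    · rw [zeta, ← hS, h, csSup_singleton]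
  refine ⟨⟨?_, fun h => ((htop h).1).trans ((htop h).2).symm⟩, htop⟩
  intro heq
  by_contra hG
  -- every element of S is strictly less than ε(Ḡ)
  have hlt : ∀ m ∈ S, m < Gᶜ.edgeSet.ncard := by
    rintro m ⟨c, hc, rfl⟩
    exact completion_lt G hG c hc
  have hpos : 0 < Gᶜ.edgeSet.ncard := by
    rw [Set.ncard_pos (Set.toFinite _)]
    rw [SimpleGraph.edgeSet_nonempty]
    intro h
    exact hG (by simpa using congrArg compl h)
  rcases Set.eq_empty_or_nonempty S with h | h
  · rw [zeta, ← hS, h, csSup_empty] at heq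
    exact absurd heq.symm (Nat.pos_iff_ne_zero.mp hpos)
  · have hbdd : BddAbove S := ⟨Gᶜ.edgeSet.ncard, fun m hm => (hlt m hm).le⟩
    have := hlt _ (Nat.sSup_mem h hbdd)
    rw [zeta, ← hS] at heq
    omega
end

section
/- (Lucky's Theorem) Let n ≥ 2 and 2 ≤ p ≤ n be integers, write n = p·⌊n/p⌋ + r with 0 ≤ r < p, and let t_1, …, t_p be the balanced p-partition of n consisting of (p − r) parts equal to ⌊n/p⌋ and r parts equal to ⌈n/p⌉. Then for every sequence of positive integers a_1, …, a_p with a_1 + ⋯ + a_p = n, one has Σ_{1 ≤ i < j ≤ p} a_i·a_j ≤ Σ_{1 ≤ i < j ≤ p} t_i·t_j. In other words, the sum of pairwise products over all p-partitions of n into positive parts is maximized by the balanced partition. -/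
lemma sum_range_ite_lt (m p c d : ℕ) (h : m ≤ p) :
    ∑ i ∈ Finset.range p, (if i < m then c else d) = m * c + (p - m) * d := by
  rw [Finset.range_eq_Ico, ← Finset.sum_Ico_consecutive _ (Nat.zero_le m) h]
  have h1 : ∑ i ∈ Finset.Ico 0 m, (if i < m then c else d) = m * c := by
    rw [Finset.sum_congr rfl (fun i hi => by
      simp only [Finset.mem_Ico] at hi; rw [if_pos hi.2])]
    simp [mul_comm]
  have h2 : ∑ i ∈ Finset.Ico m p, (if i < m then c else d) = (p - m) * d := by
    rw [Finset.sum_congr rfl (fun i hi => by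
      simp only [Finset.mem_Ico] at hi; rw [if_neg (not_lt.2 hi.1)])]
    simp [Nat.card_Ico, mul_comm]
  rw [h1, h2]

lemma pair_sum_identity (p : ℕ) (b : Fin p → ℕ) :
    (∑ i, b i) ^ 2 = 2 * (∑ i : Fin p, ∑ j : Fin p, if i < j then b i * b j else 0)
      + ∑ i, b i ^ 2 := by
  rw [sq, Finset.sum_mul_sum]
  have hsplit : ∀ i j : Fin p, b i * b j =
      (if i < j then b i * b j else 0) + (if j < i then b i * b j else 0)
        + (if i = j then b i * b j else 0) := by
    intro i j
    rcases lt_trichotomy i j with h | h | h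
    · simp [h, not_lt_of_gt h, h.ne]
    · simp [h]
    · simp [h, not_lt_of_gt h, h.ne']
  calc ∑ i : Fin p, ∑ j : Fin p, b i * b j
      = ∑ i : Fin p, ∑ j : Fin p, ((if i < j then b i * b j else 0)
          + (if j < i then b i * b j else 0) + (if i = j then b i * b j else 0)) := by
        exact Finset.sum_congr rfl fun i _ => Finset.sum_congr rfl fun j _ => hsplit i j
    _ = (∑ i : Fin p, ∑ j : Fin p, if i < j then b i * b j else 0)
          + (∑ i : Fin p, ∑ j : Fin p, if j < i then b i * b j else 0)
          + (∑ i : Fin p, ∑ j : Fin p, if i = j then b i * b j else 0) := by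
        simp [Finset.sum_add_distrib]
    _ = 2 * (∑ i : Fin p, ∑ j : Fin p, if i < j then b i * b j else 0) + ∑ i, b i ^ 2 := by
        have hswap : (∑ i : Fin p, ∑ j : Fin p, if j < i then b i * b j else 0)
            = ∑ i : Fin p, ∑ j : Fin p, if i < j then b i * b j else 0 := by
          rw [Finset.sum_comm]
          exact Finset.sum_congr rfl fun i _ => Finset.sum_congr rfl fun j _ => by
            rw [mul_comm]
        have hdiag : (∑ i : Fin p, ∑ j : Fin p, if i = j then b i * b j else 0)
            = ∑ i, b i ^ 2 := by
          refine Finset.sum_congr rfl fun i _ => ?_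
          simp [Finset.sum_ite_eq, sq]
        rw [hswap, hdiag]; ring

/-- **Lucky's Theorem.** Among all partitions of `n` into `p` positive parts, the sum of
pairwise products is maximised by the balanced partition having `p - n % p` parts equal
to `⌊n/p⌋` and `n % p` parts equal to `⌈n/p⌉`. -/
theorem lucky_theorem (n p : ℕ) (hn : 2 ≤ n) (hp : 2 ≤ p) (hpn : p ≤ n)
    (a : Fin p → ℕ) (ha : ∀ i, 1 ≤ a i) (hsum : ∑ i, a i = n) :
    (∑ i : Fin p, ∑ j : Fin p, if i < j then a i * a j else 0) ≤
      ∑ i : Fin p, ∑ j : Fin p, if i < j then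
        (if (i : ℕ) < p - n % p then n / p else n / p + 1) *
          (if (j : ℕ) < p - n % p then n / p else n / p + 1)
      else 0 := by
  have hp0 : 0 < p := by omega
  set q := n / p with hqdef
  set r := n % p with hrdef
  have hrp : r < p := Nat.mod_lt _ hp0
  have hn' : n = p * q + r := (Nat.div_add_mod n p).symm
  set t : Fin p → ℕ := fun i => if (i : ℕ) < p - r then q else q + 1 with ht
  have hnZ : (n : ℤ) = p * q + r := by exact_mod_cast hn'
  -- sum of balanced partition is n
  have hT : ∑ i, t i = n := by
    rw [ht, Fin.sum_univ_eq_sum_range (fun i => if i < p - r then q else q + 1) p,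
      sum_range_ite_lt _ _ _ _ (Nat.sub_le p r)]
    have hpr : p - (p - r) = r := by omega
    rw [hpr]
    zify [hrp.le]
    linear_combination -hnZ
  -- sum of squares of balanced partition
  have hT2 : ∑ i, t i ^ 2 = (p - r) * q ^ 2 + r * (q + 1) ^ 2 := by
    have : ∀ i : Fin p, t i ^ 2 = if (i : ℕ) < p - r then q ^ 2 else (q + 1) ^ 2 := by
      intro i
      by_cases h : (i : ℕ) < p - r <;> simp [ht, h]
    rw [Finset.sum_congr rfl fun i _ => this i,
      Fin.sum_univ_eq_sum_range (fun i => if i < p - r then q ^ 2 else (q + 1) ^ 2) p,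
      sum_range_ite_lt _ _ _ _ (Nat.sub_le p r)]
    have hpr : p - (p - r) = r := by omega
    rw [hpr]
  -- balanced sum of squares is minimal
  have hsq : ∑ i, t i ^ 2 ≤ ∑ i, a i ^ 2 := by
    rw [hT2]
    have hnonneg : (0 : ℤ) ≤ ∑ i, ((a i : ℤ) - q) * ((a i : ℤ) - q - 1) := by
      refine Finset.sum_nonneg fun i _ => ?_
      rcases le_or_gt ((a i : ℤ)) q with h | h
      · nlinarith
      · nlinarith
    have hsum' : ∑ i, (a i : ℤ) = n := by exact_mod_cast hsum
    have hexp : ∑ i, ((a i : ℤ) - q) * ((a i : ℤ) - q - 1)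
        = (∑ i, (a i : ℤ) ^ 2) - (2 * q + 1) * n + p * (q ^ 2 + q) := by
      rw [Finset.sum_congr rfl (fun i _ =>
        (by ring : ((a i : ℤ) - q) * ((a i : ℤ) - q - 1)
          = (a i : ℤ) ^ 2 - (2 * q + 1) * (a i : ℤ) + (q ^ 2 + q)))]
      rw [Finset.sum_add_distrib, Finset.sum_sub_distrib, ← Finset.mul_sum, hsum',
        Finset.sum_const, Finset.card_univ, Fintype.card_fin, nsmul_eq_mul]
    rw [hexp] at hnonneg
    zify [hrp.le]
    push_cast
    nlinarith [hnonneg, hnZ]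
  -- combine via the pairwise-product identity
  have Ka := pair_sum_identity p a
  have Kt := pair_sum_identity p t
  rw [hsum] at Ka
  rw [hT] at Kt
  have hgoal : (∑ i : Fin p, ∑ j : Fin p, if i < j then a i * a j else 0) ≤
      ∑ i : Fin p, ∑ j : Fin p, if i < j then t i * t j else 0 := by
    have := Ka.symm.trans Kt
    omega
  exact hgoal
end

section
/- Let G be a finite connected bipartite simple graph with at least one edge, whose (unique) bipartition has parts of sizes m₁ and m₂. Then ζ(G) = m₁·m₂ − ε(G), where ε(G) is the number of edges of G. -/
open SimpleGraph

lemma zeta_aux_chromatic {V : Type*} [Fintype V] [DecidableEq V] (G : SimpleGraph V)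
    (hedge : ∃ u v, G.Adj u v) (A : Finset V)
    (hbip : ∀ u v, G.Adj u v → ((u ∈ A ∧ v ∉ A) ∨ (u ∉ A ∧ v ∈ A))) :
    G.chromaticNumber = 2 := by
  obtain ⟨u0, v0, huv⟩ := hedge
  have hcol : G.Colorable 2 := by
    refine ⟨Coloring.mk (fun v => if v ∈ A then 0 else 1) ?_⟩
    intro u v h
    rcases hbip u v h with ⟨h1, h2⟩ | ⟨h1, h2⟩ <;> simp [h1, h2]
  have hle : G.chromaticNumber ≤ 2 := by
    simpa using hcol.chromaticNumber_le
  refine le_antisymm hle ?_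
  by_contra h
  push_neg at h
  have h1 : G.chromaticNumber ≤ 1 := by simpa using h
  rw [show ((1:ℕ∞)) = ((1:ℕ):ℕ∞) by simp, chromaticNumber_le_iff_colorable] at h1
  obtain ⟨c⟩ := h1
  exact c.valid huv (Subsingleton.elim _ _)

lemma zeta_aux_walk {V : Type*} [DecidableEq V] (G : SimpleGraph V) (A : Finset V)
    (hbip : ∀ u v, G.Adj u v → ((u ∈ A ∧ v ∉ A) ∨ (u ∉ A ∧ v ∈ A)))
    (c : V → ℕ) (hc : ∀ u v, G.Adj u v → c u ≠ c v)
    (a b : ℕ) (hab : a ≠ b) (hr : Set.range c = {a, b}) :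
    ∀ {u v : V} (_ : G.Walk u v), (c u = c v ↔ (u ∈ A ↔ v ∈ A)) := by
  have hmem : ∀ x, c x = a ∨ c x = b := by
    intro x
    have : c x ∈ Set.range c := ⟨x, rfl⟩
    rw [hr] at this
    simpa using this
  intro u v w
  induction w with
  | nil => simp
  | @cons u w' v h p ih =>
    have h1 : c u ≠ c w' := hc _ _ h
    have h2 := hbip _ _ h
    rcases hmem u with hu | hu <;> rcases hmem w' with hw | hw <;>
      rcases hmem v with hv | hv <;>
      rcases h2 with ⟨ha1, ha2⟩ | ⟨ha1, ha2⟩ <;>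
      simp_all <;> tauto

/-- Main counting lemma: for any chromatic colouring the number of completion
edges is `|A| * |Aᶜ| - ε(G)`. -/
lemma zeta_aux_count {V : Type*} [Fintype V] [DecidableEq V] (G : SimpleGraph V)
    (hconn : G.Connected) (A : Finset V)
    (hbip : ∀ u v, G.Adj u v → ((u ∈ A ∧ v ∉ A) ∨ (u ∉ A ∧ v ∈ A)))
    (c : V → ℕ) (hc : ∀ u v, G.Adj u v → c u ≠ c v)
    (hcard : (Set.range c).ncard = 2) :
    (completionEdges G c).ncard = A.card * Aᶜ.card - G.edgeSet.ncard := by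
  obtain ⟨a, b, hab, hr⟩ := Set.ncard_eq_two.mp hcard
  have hkey : ∀ u v : V, c u = c v ↔ (u ∈ A ↔ v ∈ A) := fun u v =>
    zeta_aux_walk G A hbip c hc a b hab hr ((hconn u v).some)
  set Sfin : Finset (Sym2 V) := (A ×ˢ Aᶜ).image (fun p => s(p.1, p.2)) with hSfin
  have hmemS : ∀ e : Sym2 V, e ∈ Sfin ↔ ∃ u v, e = s(u, v) ∧ u ∈ A ∧ v ∉ A := by
    intro e
    simp only [hSfin, Finset.mem_image, Finset.mem_product, Finset.mem_compl, Prod.exists]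
    constructor
    · rintro ⟨u, v, ⟨hu, hv⟩, rfl⟩; exact ⟨u, v, rfl, hu, hv⟩
    · rintro ⟨u, v, rfl, hu, hv⟩; exact ⟨u, v, ⟨hu, hv⟩, rfl⟩
  have hset : completionEdges G c = (↑Sfin : Set (Sym2 V)) \ G.edgeSet := by
    ext e
    simp only [completionEdges, Set.mem_setOf_eq, Set.mem_diff, Finset.mem_coe, hmemS]
    constructor
    · rintro ⟨u, v, rfl, hne, hadj, hcuv⟩
      have hx : ¬ (u ∈ A ↔ v ∈ A) := fun h => hcuv ((hkey u v).mpr h)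
      constructor
      · by_cases hu : u ∈ A
        · exact ⟨u, v, rfl, hu, fun hv => hx ⟨fun _ => hv, fun _ => hu⟩⟩
        · refine ⟨v, u, Sym2.eq_swap, ?_, hu⟩
          by_contra hv
          exact hx ⟨fun h => absurd h hu, fun h => absurd h hv⟩
      · simpa using hadj
    · rintro ⟨⟨u, v, rfl, hu, hv⟩, hne⟩
      have hne' : u ≠ v := fun h => hv (h ▸ hu)
      have hadj : ¬ G.Adj u v := by simpa using hne
      refine ⟨u, v, rfl, hne', hadj, ?_⟩
      intro h
      have := (hkey u v).mp h
      exact hv (this.mp hu)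
  have hsub : G.edgeSet ⊆ (↑Sfin : Set (Sym2 V)) := by
    intro e he
    induction e with
    | h u v =>
      have he' : G.Adj u v := he
      rw [Finset.mem_coe, hmemS]
      rcases hbip u v he' with ⟨h1, h2⟩ | ⟨h1, h2⟩
      · exact ⟨u, v, rfl, h1, h2⟩
      · exact ⟨v, u, Sym2.eq_swap, h2, h1⟩
  have hScard : Sfin.card = A.card * Aᶜ.card := by
    rw [hSfin, Finset.card_image_of_injOn, Finset.card_product]
    rintro ⟨u, v⟩ h1 ⟨u', v'⟩ h2 heq
    simp only [Finset.mem_coe, Finset.mem_product, Finset.mem_compl] at h1 h2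
    rw [Sym2.eq_iff] at heq
    rcases heq with ⟨rfl, rfl⟩ | ⟨rfl, rfl⟩
    · rfl
    · exact absurd h1.1 h2.2
  rw [hset, Set.ncard_diff hsub (G.edgeSet.toFinite), Set.ncard_coe_finset, hScard]

/-- For a connected bipartite graph $G$ with at least one edge and parts of sizes
$m_1, m_2$, one has $ζ(G) = m_1 m_2 - ε(G)$. -/
theorem zeta_bipartite {V : Type*} [Fintype V] [DecidableEq V] (G : SimpleGraph V)
    (hconn : G.Connected) (hedge : ∃ u v, G.Adj u v) (A : Finset V)
    (hbip : ∀ u v, G.Adj u v → ((u ∈ A ∧ v ∉ A) ∨ (u ∉ A ∧ v ∈ A))) :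
    zeta G = A.card * Aᶜ.card - G.edgeSet.ncard := by
  have hχ : G.chromaticNumber = 2 := zeta_aux_chromatic G hedge A hbip
  set k := A.card * Aᶜ.card - G.edgeSet.ncard with hk
  have hforall : ∀ c : V → ℕ, IsChromaticColoring G c → (completionEdges G c).ncard = k := by
    intro c ⟨h1, h2⟩
    rw [hχ] at h2
    have h2' : (Set.range c).ncard = 2 := by exact_mod_cast h2
    exact zeta_aux_count G hconn A hbip c h1 h2'
  -- explicit chromatic colouring
  obtain ⟨u0, v0, huv⟩ := hedge
  set c0 : V → ℕ := fun v => if v ∈ A then 0 else 1 with hc0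
  have hc0prop : ∀ u v, G.Adj u v → c0 u ≠ c0 v := by
    intro u v h
    rcases hbip u v h with ⟨h1, h2⟩ | ⟨h1, h2⟩ <;> simp [hc0, h1, h2]
  obtain ⟨x0, hx0, y0, hy0⟩ : ∃ x, x ∈ A ∧ ∃ y, y ∉ A := by
    rcases hbip u0 v0 huv with ⟨h1, h2⟩ | ⟨h1, h2⟩
    exacts [⟨u0, h1, v0, h2⟩, ⟨v0, h2, u0, h1⟩]
  have hrange : Set.range c0 = {0, 1} := by
    apply Set.eq_of_subset_of_subset
    · rintro x ⟨v, rfl⟩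
      by_cases hv : v ∈ A <;> simp [hc0, hv]
    · rintro x hx
      rcases hx with rfl | rfl
      · exact ⟨x0, by simp [hc0, hx0]⟩
      · exact ⟨y0, by simp [hc0, hy0]⟩
  have hcc : IsChromaticColoring G c0 := by
    refine ⟨hc0prop, ?_⟩
    rw [hχ, hrange, Set.ncard_pair (by norm_num : (0:ℕ) ≠ 1)]
    rfl
  have hsetEq : {m | ∃ c : V → ℕ, IsChromaticColoring G c ∧ m = (completionEdges G c).ncard}
      = {k} := by
    ext m
    simp only [Set.mem_setOf_eq, Set.mem_singleton_iff]
    constructor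
    · rintro ⟨c, hc, rfl⟩; exact hforall c hc
    · rintro rfl; exact ⟨c0, hcc, (hforall c0 hcc).symm⟩
  rw [zeta, hsetEq, csSup_singleton]
end

section
/- For every even integer n ≥ 4, the cycle graph C_n satisfies ζ(C_n) = n(n − 4)/4. -/
open SimpleGraph

section Aux
variable {m : ℕ}

lemma adj_iff {u v : Fin (m+2)} :
    (cycleGraph (m+2)).Adj u v ↔ v = u + 1 ∨ v = u - 1 := by
  rw [cycleGraph_adj]
  constructor
  · rintro (h | h)
    · right
      have h1 : u - v = 1 := Fin.ext (by rw [h, Fin.val_one])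
      rw [← h1]; abel
    · left
      have h1 : v - u = 1 := Fin.ext (by rw [h, Fin.val_one])
      rw [← h1]; abel
  · rintro (rfl | rfl)
    · right; simp
    · left; simp

lemma adj_succ (u : Fin (m+2)) : (cycleGraph (m+2)).Adj u (u + 1) :=
  adj_iff.mpr (Or.inl rfl)

lemma adj_pred (u : Fin (m+2)) : (cycleGraph (m+2)).Adj u (u - 1) :=
  adj_iff.mpr (Or.inr rfl)

lemma succ_parity (hev : Even (m+2)) (u : Fin (m+2)) :
    (u + 1).val % 2 ≠ u.val % 2 := by
  have hn2 : (m+2) % 2 = 0 := Nat.even_iff.mp hev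
  have hd : (u + 1).val = (u.val + 1) % (m+2) := by
    rw [Fin.add_def, Fin.val_one]
  have := u.isLt
  rcases Nat.lt_or_ge (u.val + 1) (m+2) with hlt | hge
  · rw [hd, Nat.mod_eq_of_lt hlt]; omega
  · have h2 : u.val + 1 = m+2 := by omega
    rw [hd, h2, Nat.mod_self]; omega

lemma adj_parity (hev : Even (m+2)) {u v : Fin (m+2)} (h : (cycleGraph (m+2)).Adj u v) :
    u.val % 2 ≠ v.val % 2 := by
  rcases adj_iff.mp h with rfl | rfl
  · exact (succ_parity hev u).symm
  · have h1 : u - 1 + 1 = u := by abel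
    have := succ_parity hev (u - 1)
    rw [h1] at this
    exact this

lemma chrom (hev : Even (m+2)) : (cycleGraph (m+2)).chromaticNumber = 2 := by
  apply le_antisymm
  · have hcol : (cycleGraph (m+2)).Colorable 2 := by
      refine ⟨⟨fun v => ⟨v.val % 2, by omega⟩, ?_⟩⟩
      intro u v huv
      simp only [top_adj, ne_eq, Fin.mk.injEq]
      exact adj_parity hev huv
    exact_mod_cast hcol.chromaticNumber_le
  · have hclique : (cycleGraph (m+2)).IsClique (({0, 1} : Finset (Fin (m+2))) : Set (Fin (m+2))) := by
      have hadj : (cycleGraph (m+2)).Adj 0 1 := by simpa using adj_succ (0 : Fin (m+2))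
      intro x hx y hy hxy
      simp only [Finset.coe_insert, Set.mem_insert_iff, Finset.coe_singleton,
        Set.mem_singleton_iff] at hx hy
      rcases hx with rfl | rfl <;> rcases hy with rfl | rfl <;>
        first | exact absurd rfl hxy | exact hadj | exact hadj.symm
    have := hclique.card_le_chromaticNumber
    rwa [Finset.card_pair (by simp : (0 : Fin (m+2)) ≠ 1)] at this

lemma color_form (hev : Even (m+2)) {c : Fin (m+2) → ℕ}
    (hc : IsChromaticColoring (cycleGraph (m+2)) c) (v : Fin (m+2)) :
    c v = if v.val % 2 = 0 then c 0 else c 1 := by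
  have hab : c 0 ≠ c 1 := hc.1 _ _ (by simpa using adj_succ (0 : Fin (m+2)))
  have hnc : (Set.range c).ncard = 2 := by
    have := hc.2
    rw [chrom hev] at this
    exact_mod_cast this
  have hrange : Set.range c = {c 0, c 1} := by
    refine (Set.eq_of_subset_of_ncard_le ?_ ?_ (Set.finite_range c)).symm
    · rintro x (rfl | rfl) <;> first | exact Set.mem_range_self _ |
        exact Set.mem_range_self _
    · rw [hnc, Set.ncard_pair hab]
  have claim : ∀ k (hk : k < m+2), c ⟨k, hk⟩ = if k % 2 = 0 then c 0 else c 1 := by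
    intro k
    induction k with
    | zero => intro hk; simp
    | succ k ih =>
      intro hk
      have hk' : k < m+2 := by omega
      have hstep : (⟨k, hk'⟩ : Fin (m+2)) + 1 = ⟨k+1, hk⟩ := by
        apply Fin.ext
        rw [Fin.add_def, Fin.val_one]
        exact Nat.mod_eq_of_lt hk
      have hne : c ⟨k, hk'⟩ ≠ c ⟨k+1, hk⟩ := by
        have := hc.1 _ _ (adj_succ (⟨k, hk'⟩ : Fin (m+2)))
        rwa [hstep] at this
      have hmem : c ⟨k+1, hk⟩ ∈ ({c 0, c 1} : Set ℕ) := by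
        rw [← hrange]; exact Set.mem_range_self _
      have := ih hk'
      rcases hmem with h | h <;> rw [h] <;> split_ifs with hp <;>
        (try rfl) <;> rw [this] at hne <;> split_ifs at hne with hq <;>
        first | omega | exact absurd h (by rw [h] at hne ⊢; tauto) |
          simp_all | tauto
  have := claim v.val v.isLt
  simpa using this

end Aux

lemma evens_range (n : ℕ) : ((Finset.range n).filter (fun k => k % 2 = 0)).card = (n+1)/2 := by
  induction n with
  | zero => simp
  | succ n ih =>
    rw [Finset.range_add_one, Finset.filter_insert]
    split_ifs with h
    · rw [Finset.card_insert_of_notMem (by simp)]; omega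
    · omega

lemma odds_range (n : ℕ) : ((Finset.range n).filter (fun k => k % 2 = 1)).card = n/2 := by
  induction n with
  | zero => simp
  | succ n ih =>
    rw [Finset.range_add_one, Finset.filter_insert]
    split_ifs with h
    · rw [Finset.card_insert_of_notMem (by simp)]; omega
    · omega

lemma card_fin_filter {n : ℕ} (p : ℕ → Prop) [DecidablePred p] :
    (Finset.univ.filter (fun v : Fin n => p v.val)).card = ((Finset.range n).filter p).card := by
  apply Finset.card_bij (fun v _ => v.val)
  · intro v hv
    simp only [Finset.mem_filter, Finset.mem_univ, true_and] at hv
    simp [v.isLt, hv]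
  · intro a _ b _ h; exact Fin.ext h
  · intro b hb
    simp only [Finset.mem_filter, Finset.mem_range] at hb
    exact ⟨⟨b, hb.1⟩, by simp [hb.2], rfl⟩

section Count
variable {m : ℕ}

lemma color_ne_iff (hev : Even (m+2)) {c : Fin (m+2) → ℕ}
    (hc : IsChromaticColoring (cycleGraph (m+2)) c) (u v : Fin (m+2)) :
    c u ≠ c v ↔ u.val % 2 ≠ v.val % 2 := by
  have hab : c 0 ≠ c 1 := hc.1 _ _ (by simpa using adj_succ (0 : Fin (m+2)))
  rw [color_form hev hc u, color_form hev hc v]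
  split_ifs <;> omega

lemma count_completion (hm : 2 ≤ m) (hev : Even (m+2)) {c : Fin (m+2) → ℕ}
    (hc : IsChromaticColoring (cycleGraph (m+2)) c) :
    (completionEdges (cycleGraph (m+2)) c).ncard = (m+2) * (m+2-4) / 4 := by
  classical
  have hn2 : (m+2) % 2 = 0 := Nat.even_iff.mp hev
  set E : Finset (Fin (m+2)) := Finset.univ.filter (fun v => v.val % 2 = 0) with hE
  set O : Finset (Fin (m+2)) := Finset.univ.filter (fun v => v.val % 2 = 1) with hO
  have hcardE : E.card = (m+2) / 2 := by
    rw [hE, card_fin_filter (fun k => k % 2 = 0), evens_range]; omega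
  have hcardO : O.card = (m+2) / 2 := by
    rw [hO, card_fin_filter (fun k => k % 2 = 1), odds_range]
  set S : Finset (Fin (m+2) × Fin (m+2)) :=
    (E ×ˢ O).filter (fun p => (cycleGraph (m+2)).Adj p.1 p.2) with hS
  set T : Finset (Fin (m+2) × Fin (m+2)) :=
    (E ×ˢ O).filter (fun p => ¬ (cycleGraph (m+2)).Adj p.1 p.2) with hT
  have hSeq : S = (E.image fun u => (u, u+1)) ∪ (E.image fun u => (u, u-1)) := by
    ext p
    simp only [hS, Finset.mem_filter, Finset.mem_product, Finset.mem_union,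
      Finset.mem_image, hE, hO, Finset.mem_univ, true_and]
    constructor
    · rintro ⟨⟨h1, h2⟩, hadj⟩
      rcases adj_iff.mp hadj with h | h
      · exact Or.inl ⟨p.1, h1, by rw [← h]⟩
      · exact Or.inr ⟨p.1, h1, by rw [← h]⟩
    · rintro (⟨u, hu, rfl⟩ | ⟨u, hu, rfl⟩)
      · have := succ_parity hev u
        have h2 : (u+1).val % 2 < 2 := Nat.mod_lt _ (by omega)
        exact ⟨⟨hu, by dsimp only; omega⟩, adj_succ u⟩
      · have hadj := adj_pred u
        have := adj_parity hev hadj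
        have h2 : (u-1).val % 2 < 2 := Nat.mod_lt _ (by omega)
        exact ⟨⟨hu, by dsimp only; omega⟩, hadj⟩
  have hinj1 : Function.Injective (fun u : Fin (m+2) => (u, u+1)) := by
    intro a b h; exact (Prod.ext_iff.mp h).1
  have hinj2 : Function.Injective (fun u : Fin (m+2) => (u, u-1)) := by
    intro a b h; exact (Prod.ext_iff.mp h).1
  have hdisj : Disjoint (E.image fun u => (u, u+1)) (E.image fun u => (u, u-1)) := by
    rw [Finset.disjoint_left]
    rintro p hp1 hp2
    simp only [Finset.mem_image] at hp1 hp2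
    obtain ⟨u, _, rfl⟩ := hp1
    obtain ⟨u', _, heq⟩ := hp2
    have h1 : u' = u := congrArg Prod.fst heq
    subst h1
    have h2 : u' - 1 = u' + 1 := congrArg Prod.snd heq
    have h4 : u' + (1 + 1) = u' := by
      calc u' + (1 + 1) = (u' + 1) + 1 := by abel
      _ = (u' - 1) + 1 := by rw [h2]
      _ = u' := by abel
    have h5 : (1 + 1 : Fin (m+2)) = 0 := add_left_cancel (h4.trans (add_zero u').symm)
    have h6 : ((1:Fin (m+2)) + 1).val = (1 + 1) % (m+2) := by
      rw [Fin.add_def, Fin.val_one]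
    rw [h5] at h6
    rw [Nat.mod_eq_of_lt (by omega)] at h6
    simp at h6
  have hcardS : S.card = m+2 := by
    rw [hSeq, Finset.card_union_of_disjoint hdisj,
      Finset.card_image_of_injective _ hinj1, Finset.card_image_of_injective _ hinj2,
      hcardE]
    omega
  have hprod : (E ×ˢ O).card = ((m+2)/2) * ((m+2)/2) := by
    rw [Finset.card_product, hcardE, hcardO]
  have hsplit := Finset.card_filter_add_card_filter_not
    (s := E ×ˢ O) (p := fun p => (cycleGraph (m+2)).Adj p.1 p.2)
  rw [← hS] at hsplit
  have hcardT : T.card = ((m+2)/2) * ((m+2)/2) - (m+2) := by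
    rw [hT, Finset.filter_not, Finset.card_sdiff_of_subset (Finset.filter_subset _ _), ← hS,
      hcardS, hprod]
  -- completionEdges equals the image of T under Sym2.mk
  have hset : completionEdges (cycleGraph (m+2)) c = ↑(T.image fun p => s(p.1, p.2)) := by
    ext e
    simp only [completionEdges, Set.mem_setOf_eq, Finset.coe_image, Set.mem_image,
      Finset.mem_coe, hT, Finset.mem_filter, Finset.mem_product, hE, hO,
      Finset.mem_univ, true_and]
    constructor
    · rintro ⟨u, v, rfl, hne, hnadj, hcol⟩
      have hp := (color_ne_iff hev hc u v).mp hcol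
      have h2u : u.val % 2 < 2 := Nat.mod_lt _ (by omega)
      have h2v : v.val % 2 < 2 := Nat.mod_lt _ (by omega)
      rcases Nat.eq_zero_or_pos (u.val % 2) with h0 | h0
      · exact ⟨(u, v), ⟨⟨by dsimp only; omega, by dsimp only; omega⟩, hnadj⟩, rfl⟩
      · refine ⟨(v, u), ⟨⟨by dsimp only; omega, by dsimp only; omega⟩,
          fun h => hnadj h.symm⟩, ?_⟩
        exact (Sym2.eq_swap).symm
    · rintro ⟨⟨u, v⟩, ⟨⟨h1, h2⟩, hnadj⟩, rfl⟩
      dsimp only at h1 h2 hnadj ⊢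
      refine ⟨u, v, rfl, ?_, hnadj, (color_ne_iff hev hc u v).mpr (by omega)⟩
      intro h; rw [h] at h1; omega
  have hinj : Set.InjOn (fun p : Fin (m+2) × Fin (m+2) => s(p.1, p.2)) ↑T := by
    rintro ⟨u, v⟩ hp ⟨u', v'⟩ hq h
    simp only [Finset.mem_coe, hT, Finset.mem_filter, Finset.mem_product, hE, hO,
      Finset.mem_univ, true_and] at hp hq
    simp only [Sym2.eq, Sym2.rel_iff', Prod.mk.injEq, Prod.swap_prod_mk] at h
    rcases h with ⟨rfl, rfl⟩ | ⟨rfl, rfl⟩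
    · rfl
    · exfalso; omega
  rw [hset, Set.ncard_coe_finset, Finset.card_image_of_injOn (by exact_mod_cast hinj), hcardT]
  -- arithmetic
  obtain ⟨q, hq⟩ : ∃ q, m + 2 = 2 * q := ⟨(m+2)/2, by omega⟩
  obtain ⟨r, hr⟩ : ∃ r, q = r + 2 := ⟨q - 2, by omega⟩
  subst hr
  have : m = 2 * r + 2 := by omega
  subst this
  have e1 : (2*r+2+2) / 2 = r + 2 := by omega
  rw [e1]
  have hx : (r+2)*(r+2) = r*r + 4*r + 4 := by ring
  have e2 : (2*r+2+2) * (2*r+2+2-4) = 4 * ((r+2)*(r+2) - (2*r+2+2)) := by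
    have hsub : 2*r+2+2-4 = 2*r := by omega
    have : (r+2)*(r+2) - (2*r+2+2) = r*r + 2*r := by omega
    rw [hsub, this]; ring
  rw [e2, Nat.mul_div_cancel_left _ (by norm_num)]
end Count

lemma base_coloring (hm : 2 ≤ m) (hev : Even (m+2)) :
    IsChromaticColoring (cycleGraph (m+2)) (fun v : Fin (m+2) => v.val % 2) := by
  constructor
  · intro u v h
    exact adj_parity hev h
  · have hr : Set.range (fun v : Fin (m+2) => v.val % 2) = {0, 1} := by
      ext x
      constructor
      · rintro ⟨v, rfl⟩
        have : v.val % 2 < 2 := Nat.mod_lt _ (by omega)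
        rcases (by omega : v.val % 2 = 0 ∨ v.val % 2 = 1) with h | h <;> simp [h]
      · rintro (rfl | rfl)
        · exact ⟨0, rfl⟩
        · exact ⟨1, by simp [Fin.val_one]⟩
    rw [hr, chrom hev, Set.ncard_pair (by omega)]
    rfl


/-- For even `n ≥ 4`, `ζ(C_n) = n(n-4)/4`. -/
theorem zeta_cycle_even (n : ℕ) (hn : 4 ≤ n) (hev : Even n) :
    zeta (cycleGraph n) = n * (n - 4) / 4 := by
  obtain ⟨m, rfl⟩ : ∃ m, n = m + 2 := ⟨n - 2, by omega⟩
  have hm : 2 ≤ m := by omega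
  have hSeq : {k | ∃ c : Fin (m+2) → ℕ, IsChromaticColoring (cycleGraph (m+2)) c ∧
      k = (completionEdges (cycleGraph (m+2)) c).ncard} = {(m+2) * (m+2-4) / 4} := by
    ext k
    constructor
    · rintro ⟨c, hc, rfl⟩
      exact count_completion hm hev hc
    · rintro rfl
      exact ⟨_, base_coloring hm hev, (count_completion hm hev (base_coloring hm hev)).symm⟩
  rw [zeta, hSeq, csSup_singleton]
end

section
/- For every odd integer n ≥ 3 with n ≡ 0 (mod 3), the cycle graph C_n satisfies ζ(C_n) = n(n/3 − 1) = n(n − 3)/3. -/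
open SimpleGraph

open Finset

section AuxZeta

/-- The "different colours" graph. -/
def diffG {V : Type*} (c : V → ℕ) : SimpleGraph V where
  Adj u v := c u ≠ c v
  symm := ⟨fun _ _ h => Ne.symm h⟩
  loopless := ⟨fun _ h => h rfl⟩

instance {V : Type*} (c : V → ℕ) : DecidableRel (diffG c).Adj :=
  fun u v => inferInstanceAs (Decidable (c u ≠ c v))

lemma diffG_adj {V : Type*} (c : V → ℕ) (u v : V) : (diffG c).Adj u v ↔ c u ≠ c v := Iff.rfl

lemma completion_eq {V : Type*} (G : SimpleGraph V) (c : V → ℕ) :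
    completionEdges G c = (diffG c).edgeSet \ G.edgeSet := by
  have h1 : (diffG c).edgeSet = {e | ∃ u v, e = s(u, v) ∧ c u ≠ c v} := by
    ext e
    induction e using Sym2.ind with
    | _ u v =>
      simp only [mem_edgeSet, diffG_adj, Set.mem_setOf_eq]
      constructor
      · intro h; exact ⟨u, v, rfl, h⟩
      · rintro ⟨a, b, hab, hc⟩
        rw [Sym2.eq_iff] at hab
        rcases hab with ⟨rfl, rfl⟩ | ⟨rfl, rfl⟩
        · exact hc
        · exact hc.symm
  rw [h1]
  ext e
  simp only [completionEdges, Set.mem_setOf_eq, Set.mem_diff]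
  constructor
  · rintro ⟨u, v, rfl, hne, hnadj, hc⟩
    exact ⟨⟨u, v, rfl, hc⟩, by rwa [mem_edgeSet]⟩
  · rintro ⟨⟨u, v, rfl, hc⟩, hne⟩
    rw [mem_edgeSet] at hne
    exact ⟨u, v, rfl, fun h => hc (congrArg c h), hne, hc⟩

lemma cycle_edge_card (k : ℕ) : #(cycleGraph (k + 3)).edgeFinset = k + 3 := by
  have h := (cycleGraph (k + 3)).sum_degrees_eq_twice_card_edges
  simp only [cycleGraph_degree_three_le, Finset.sum_const, card_univ, Fintype.card_fin,
    smul_eq_mul] at h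
  omega

lemma fiber_sq_count {V : Type*} [Fintype V] [DecidableEq V] (c : V → ℕ) :
    #(univ.filter fun p : V × V => c p.1 = c p.2)
      = ∑ b ∈ univ.image c, (#(univ.filter fun a => c a = b)) ^ 2 := by
  rw [Finset.card_eq_sum_card_fiberwise
    (f := fun p : V × V => c p.1) (t := univ.image c)
    (fun p _ => mem_image_of_mem _ (mem_univ _))]
  refine Finset.sum_congr rfl fun b _ => ?_
  rw [Finset.filter_filter]
  have : (univ.filter fun p : V × V => c p.1 = c p.2 ∧ c p.1 = b)
      = (univ.filter fun a : V => c a = b) ×ˢ (univ.filter fun a : V => c a = b) := by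
    rw [← Finset.univ_product_univ, ← Finset.filter_product]
    apply Finset.filter_congr
    intro p _
    constructor
    · rintro ⟨h1, h2⟩; exact ⟨h2, h2 ▸ h1.symm ▸ rfl⟩
    · rintro ⟨h1, h2⟩; exact ⟨h1.trans h2.symm, h1⟩
  rw [this, Finset.card_product, sq]

/-- Master counting lemma. -/
lemma master (n : ℕ) (hn : 3 ≤ n) (c : Fin n → ℕ)
    (hp : ∀ u v, (cycleGraph n).Adj u v → c u ≠ c v) :
    ∃ d : ℕ, (completionEdges (cycleGraph n) c).ncard = d - n ∧
      2 * d + ∑ b ∈ univ.image c, (#(univ.filter fun a => c a = b)) ^ 2 = n * n := by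
  obtain ⟨k, rfl⟩ : ∃ k, n = k + 3 := ⟨n - 3, by omega⟩
  refine ⟨#(diffG c).edgeFinset, ?_, ?_⟩
  · rw [completion_eq]
    have hsub : (cycleGraph (k + 3)).edgeSet ⊆ (diffG c).edgeSet := by
      intro e
      induction e using Sym2.ind with
      | _ u v =>
        rw [mem_edgeSet, mem_edgeSet, diffG_adj]
        exact hp u v
    rw [Set.ncard_diff hsub]
    have h1 : (diffG c).edgeSet.ncard = #(diffG c).edgeFinset := by
      rw [← coe_edgeFinset, Set.ncard_coe_finset]
    have h2 : (cycleGraph (k + 3)).edgeSet.ncard = k + 3 := by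
      rw [← coe_edgeFinset, Set.ncard_coe_finset, cycle_edge_card]
    rw [h1, h2]
  · rw [← fiber_sq_count]
    have h2 : 2 * #(diffG c).edgeFinset
        = #(univ.filter fun p : Fin (k+3) × Fin (k+3) => ¬ c p.1 = c p.2) := by
      rw [two_mul_card_edgeFinset]
      apply congrArg
      apply Finset.filter_congr
      rintro ⟨u, v⟩ _
      simp [diffG_adj]
    have h3 : #(univ.filter fun p : Fin (k+3) × Fin (k+3) => c p.1 = c p.2)
        + #(univ.filter fun p : Fin (k+3) × Fin (k+3) => ¬ c p.1 = c p.2)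
        = #(univ : Finset (Fin (k+3) × Fin (k+3))) :=
      Finset.card_filter_add_card_filter_not _
    have h4 : #(univ : Finset (Fin (k+3) × Fin (k+3))) = (k+3) * (k+3) := by simp
    rw [show (k+3) * (k+3) = #(univ : Finset (Fin (k+3) × Fin (k+3))) from h4.symm]
    omega

/-- The canonical `mod 3` colouring is proper on the cycle. -/
lemma c0_proper (n : ℕ) (hn : 3 ≤ n) (hmod : n % 3 = 0) :
    ∀ u v : Fin n, (cycleGraph n).Adj u v → u.val % 3 ≠ v.val % 3 := by
  have key : ∀ u v : Fin n, ((u - v : Fin n) : ℕ) = 1 → u.val % 3 ≠ v.val % 3 := by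
    intro u v h
    rw [Fin.sub_def] at h
    have h' : (n - v.val + u.val) % n = 1 := h
    have hu := u.isLt
    have hv := v.isLt
    have hdm := Nat.div_add_mod (n - v.val + u.val) n
    have hq : (n - v.val + u.val) / n < 2 := Nat.div_lt_of_lt_mul (by omega)
    rw [h'] at hdm
    generalize hgen : (n - v.val + u.val) / n = q at hdm hq
    interval_cases q
    · rw [Nat.mul_zero] at hdm; omega
    · rw [Nat.mul_one] at hdm; omega
  intro u v hadj
  rw [cycleGraph_adj'] at hadj
  rcases hadj with h | h
  · exact key u v h
  · exact fun he => key v u h he.symm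

open Fin.NatCast in
lemma adj_succ_s9 (k j : ℕ) : (cycleGraph (k + 3)).Adj (↑(j + 1)) (↑j) := by
  rw [cycleGraph_adj']
  left
  have : ((j + 1 : ℕ) : Fin (k + 3)) - ((j : ℕ) : Fin (k + 3)) = 1 := by
    push_cast
    abel
  rw [this, Fin.val_one]

open Fin.NatCast in
/-- A walk around the cycle. -/
def cw (k : ℕ) : (j : ℕ) → (cycleGraph (k + 3)).Walk (↑j) 0
  | 0 => Walk.nil.copy (by simp) rfl
  | j + 1 => Walk.cons (adj_succ_s9 k j) (cw k j)

lemma cw_length (k j : ℕ) : (cw k j).length = j := by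
  induction j with
  | zero => simp [cw]
  | succ j ih => simp [cw, ih]

lemma chrom_cycle (n : ℕ) (hn : 3 ≤ n) (hodd : Odd n) (hmod : n % 3 = 0) :
    (cycleGraph n).chromaticNumber = 3 := by
  obtain ⟨k, rfl⟩ : ∃ k, n = k + 3 := ⟨n - 3, by omega⟩
  apply le_antisymm
  · have hcol : (cycleGraph (k + 3)).Colorable 3 := by
      refine ⟨Coloring.mk (fun v => ⟨v.val % 3, by omega⟩) ?_⟩
      intro u v hadj h
      exact c0_proper _ hn hmod u v hadj (by simpa [Fin.ext_iff] using h)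
    exact_mod_cast hcol.chromaticNumber_le
  · exact Walk.three_le_chromaticNumber_of_odd_loop
      ((cw k (k + 3)).copy (by simp) rfl)
      (by rw [Walk.length_copy, cw_length]; exact hodd)

lemma c0_image (n : ℕ) (hn : 3 ≤ n) :
    univ.image (fun v : Fin n => v.val % 3) = ({0, 1, 2} : Finset ℕ) := by
  apply Finset.Subset.antisymm
  · intro b hb
    simp only [mem_image] at hb
    obtain ⟨a, _, rfl⟩ := hb
    have : a.val % 3 < 3 := Nat.mod_lt _ (by omega)
    simp only [mem_insert, mem_singleton]
    omega
  · intro b hb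
    simp only [mem_insert, mem_singleton] at hb
    simp only [mem_image]
    rcases hb with rfl | rfl | rfl
    · exact ⟨⟨0, by omega⟩, mem_univ _, rfl⟩
    · exact ⟨⟨1, by omega⟩, mem_univ _, rfl⟩
    · exact ⟨⟨2, by omega⟩, mem_univ _, rfl⟩

lemma c0_fiber (m : ℕ) (r : ℕ) (hr : r < 3) :
    #(univ.filter fun a : Fin (3 * m) => a.val % 3 = r) = m := by
  have key : #(univ.filter fun a : Fin (3 * m) => a.val % 3 = r)
      = #(univ : Finset (Fin m)) :=
    Finset.card_bij' (fun a _ => ⟨a.val / 3, by have := a.2; omega⟩)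
      (fun b _ => ⟨3 * b.val + r, by have := b.2; omega⟩)
      (fun a ha => mem_univ _)
      (by intro b hb; simp only [mem_filter, mem_univ, true_and]; omega)
      (by intro a ha; simp only [mem_filter, mem_univ, true_and] at ha
          apply Fin.ext; simp only; omega)
      (by intro b hb; apply Fin.ext; simp only; omega)
  rw [key]
  simp

lemma sq_sum_bound (a b c m : ℤ) (h : a + b + c = 3 * m) :
    3 * (m * m) ≤ a ^ 2 + b ^ 2 + c ^ 2 := by
  have h2 : (a + b + c) ^ 2 = 9 * (m * m) := by rw [h]; ring
  nlinarith [sq_nonneg (a - b), sq_nonneg (a - c), sq_nonneg (b - c), h2]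

end AuxZeta

/-- For odd `n ≥ 3` with `n ≡ 0 (mod 3)`, `ζ(C_n) = n(n/3 - 1) = n(n-3)/3`. -/
theorem zeta_cycle_odd_zero_mod_three (n : ℕ) (hn : 3 ≤ n) (hodd : Odd n)
    (hmod : n % 3 = 0) :
    zeta (cycleGraph n) = n * (n / 3 - 1) ∧ zeta (cycleGraph n) = n * (n - 3) / 3 := by
  obtain ⟨m, hnm⟩ : ∃ m, n = 3 * m := ⟨n / 3, by omega⟩
  obtain ⟨m', rfl⟩ : ∃ m', m = m' + 1 := ⟨m - 1, by omega⟩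
  set m := m' + 1 with hm'
  have hm : 1 ≤ m := by omega
  have hx : n * (m - 1) + n = 3 * (m * m) := by
    rw [hnm, hm']
    simp only [Nat.add_sub_cancel]
    ring
  have hnn : n * n = 9 * (m * m) := by rw [hnm]; ring
  have hchrom := chrom_cycle n hn hodd hmod
  set c0 : Fin n → ℕ := fun v => v.val % 3 with hc0
  have hc0proper := c0_proper n hn hmod
  have hc0range : (Set.range c0).ncard = 3 := by
    have : Set.range c0 = ↑(univ.image c0) := by
      rw [Finset.coe_image, Finset.coe_univ, Set.image_univ]
    rw [this, Set.ncard_coe_finset, c0_image n hn]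
    decide
  have hc0chrom : IsChromaticColoring (cycleGraph n) c0 := by
    refine ⟨hc0proper, ?_⟩
    rw [hc0range, hchrom]
    norm_cast
  -- the value achieved by c0
  have hc0val : (completionEdges (cycleGraph n) c0).ncard = n * (m - 1) := by
    obtain ⟨d, hd1, hd2⟩ := master n hn c0 hc0proper
    rw [c0_image n hn] at hd2
    have e0 : #(univ.filter fun a : Fin n => c0 a = 0) = m := by
      subst hnm; exact c0_fiber m 0 (by omega)
    have e1 : #(univ.filter fun a : Fin n => c0 a = 1) = m := by
      subst hnm; exact c0_fiber m 1 (by omega)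
    have e2 : #(univ.filter fun a : Fin n => c0 a = 2) = m := by
      subst hnm; exact c0_fiber m 2 (by omega)
    rw [Finset.sum_insert (by norm_num), Finset.sum_insert (by norm_num),
      Finset.sum_singleton, e0, e1, e2] at hd2
    have hd : d = 3 * (m * m) := by linarith [hd2, hnn]
    rw [hd1, hd, ← hx, Nat.add_sub_cancel]
  -- upper bound for all chromatic colourings
  have hub : ∀ x ∈ {x | ∃ c : Fin n → ℕ, IsChromaticColoring (cycleGraph n) c ∧
      x = (completionEdges (cycleGraph n) c).ncard}, x ≤ n * (m - 1) := by
    rintro x ⟨c, ⟨hproper, hrange⟩, rfl⟩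
    have hr3 : (Set.range c).ncard = 3 := by
      rw [hchrom] at hrange
      exact_mod_cast hrange
    have himg : #(univ.image c) = 3 := by
      have : Set.range c = ↑(univ.image c) := by
        rw [Finset.coe_image, Finset.coe_univ, Set.image_univ]
      rw [this, Set.ncard_coe_finset] at hr3
      exact hr3
    obtain ⟨d, hd1, hd2⟩ := master n hn c hproper
    obtain ⟨a, b, e, hab, hac, hbc, himg3⟩ := Finset.card_eq_three.mp himg
    rw [himg3, Finset.sum_insert (by simp [hab, hac]), Finset.sum_insert (by simp [hbc]),
      Finset.sum_singleton] at hd2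
    set fa := #(univ.filter fun x => c x = a) with hfa
    set fb := #(univ.filter fun x => c x = b) with hfb
    set fe := #(univ.filter fun x => c x = e) with hfe
    have hsum : fa + fb + fe = n := by
      have hcard := Finset.card_eq_sum_card_image c (univ : Finset (Fin n))
      rw [himg3, Finset.sum_insert (by simp [hab, hac]), Finset.sum_insert (by simp [hbc]),
        Finset.sum_singleton, card_univ, Fintype.card_fin] at hcard
      omega
    have hineq : 3 * (m * m) ≤ fa ^ 2 + fb ^ 2 + fe ^ 2 := by
      have := sq_sum_bound (fa : ℤ) (fb : ℤ) (fe : ℤ) (m : ℤ)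
        (by exact_mod_cast (hsum.trans hnm : fa + fb + fe = 3 * m))
      exact_mod_cast this
    have hd : d ≤ 3 * (m * m) := by linarith [hd2, hineq, hnn]
    rw [hd1, Nat.sub_le_iff_le_add]
    linarith [hd, hx]
  have hmem : n * (m - 1) ∈ {x | ∃ c : Fin n → ℕ, IsChromaticColoring (cycleGraph n) c ∧
      x = (completionEdges (cycleGraph n) c).ncard} := ⟨c0, hc0chrom, hc0val.symm⟩
  have hzeta : zeta (cycleGraph n) = n * (m - 1) := by
    unfold zeta
    exact le_antisymm (csSup_le ⟨_, hmem⟩ hub) (le_csSup ⟨n * (m - 1), hub⟩ hmem)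
  have hdiv3 : n / 3 = m := by omega
  constructor
  · rw [hzeta, hdiv3]
  · rw [hzeta]
    have h9 : n * (n - 3) = 3 * (n * (m - 1)) := by
      rw [hnm, hm']
      rw [show 3 * (m' + 1) - 3 = 3 * m' by omega, show m' + 1 - 1 = m' by omega]
      ring
    rw [h9, Nat.mul_div_cancel_left _ (by norm_num : 0 < 3)]
end

section
/- For every integer n ≥ 3, the wheel graph W_{1,n} satisfies ζ(W_{1,n}) = ζ(C_n); that is, the chromatic completion number of the wheel equals that of its rim cycle, since all completion edges must lie within the rim. -/
open SimpleGraph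

/-- The wheel graph `W_{1,n}`: the cycle `C_n` (on the `some` vertices) joined to a
central hub vertex `none` adjacent to every rim vertex. -/
def wheelGraph (n : ℕ) : SimpleGraph (Option (Fin n)) where
  Adj u v := match u, v with
    | none, none => False
    | none, some _ => True
    | some _, none => True
    | some i, some j => (cycleGraph n).Adj i j
  symm := by
    constructor
    intro u v h
    cases u <;> cases v <;> simp_all
    exact ((cycleGraph n).adj_symm h)
  loopless := by
    constructor
    intro u h
    cases u with
    | none => exact h
    | some i => exact (cycleGraph n).irrefl h

lemma wheel_adj_some_some {n : ℕ} {i j : Fin n} :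
    (wheelGraph n).Adj (some i) (some j) ↔ (cycleGraph n).Adj i j := Iff.rfl

lemma wheel_adj_some_none {n : ℕ} (i : Fin n) : (wheelGraph n).Adj (some i) none := trivial

lemma wheel_adj_none_some {n : ℕ} (i : Fin n) : (wheelGraph n).Adj none (some i) := trivial

lemma completionEdges_wheel (n : ℕ) (c : Option (Fin n) → ℕ) :
    completionEdges (wheelGraph n) c
      = Sym2.map some '' completionEdges (cycleGraph n) (c ∘ some) := by
  ext e
  constructor
  · rintro ⟨u, v, rfl, huv, hadj, hc⟩
    match u, v with
    | none, none => exact absurd rfl huv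
    | none, some j => exact absurd (wheel_adj_none_some j) hadj
    | some i, none => exact absurd (wheel_adj_some_none i) hadj
    | some i, some j =>
      exact ⟨s(i, j), ⟨i, j, rfl, fun h => huv (by rw [h]), hadj, hc⟩, rfl⟩
  · rintro ⟨e', ⟨u, v, rfl, huv, hadj, hc⟩, rfl⟩
    exact ⟨some u, some v, rfl, by simp [huv], hadj, hc⟩

lemma ncard_completionEdges_wheel (n : ℕ) (c : Option (Fin n) → ℕ) :
    (completionEdges (wheelGraph n) c).ncard
      = (completionEdges (cycleGraph n) (c ∘ some)).ncard := by
  rw [completionEdges_wheel, Set.ncard_image_of_injective _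
    (Sym2.map.injective (Option.some_injective _))]

lemma chromaticNumber_wheel (n : ℕ) :
    (wheelGraph n).chromaticNumber = (cycleGraph n).chromaticNumber + 1 := by
  have hCcol : (cycleGraph n).Colorable (Fintype.card (Fin n)) :=
    (cycleGraph n).colorable_of_fintype
  have hWcol : (wheelGraph n).Colorable (Fintype.card (Option (Fin n))) :=
    (wheelGraph n).colorable_of_fintype
  set m := ((cycleGraph n).chromaticNumber).toNat with hm
  set k := ((wheelGraph n).chromaticNumber).toNat with hk
  have hCne : (cycleGraph n).chromaticNumber ≠ ⊤ :=
    (hCcol.chromaticNumber_le.trans_lt (WithTop.coe_lt_top _)).ne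
  have hWne : (wheelGraph n).chromaticNumber ≠ ⊤ :=
    (hWcol.chromaticNumber_le.trans_lt (WithTop.coe_lt_top _)).ne
  have hCm : (cycleGraph n).chromaticNumber = (m : ℕ∞) := (ENat.coe_toNat hCne).symm
  have hWk : (wheelGraph n).chromaticNumber = (k : ℕ∞) := (ENat.coe_toNat hWne).symm
  have hCcolm : (cycleGraph n).Colorable m := colorable_chromaticNumber hCcol
  have hWcolk : (wheelGraph n).Colorable k := colorable_chromaticNumber hWcol
  -- upper bound: χ(W) ≤ m + 1
  have hW_le : (wheelGraph n).Colorable (m + 1) := by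
    obtain ⟨d⟩ := hCcolm
    refine ⟨SimpleGraph.Coloring.mk
      (fun o => o.elim (Fin.last m) (fun i => (d i).castSucc)) ?_⟩
    rintro (_ | i) (_ | j) h
    · exact absurd h ((wheelGraph n).loopless.irrefl none)
    · exact (Fin.castSucc_lt_last (d j)).ne'
    · exact (Fin.castSucc_lt_last (d i)).ne
    · exact fun hcc => d.valid h (Fin.castSucc_injective _ hcc)
  -- lower bound: χ(C) ≤ k - 1
  have hk1 : 1 ≤ k := by
    have hpos : 0 < (wheelGraph n).chromaticNumber := chromaticNumber_pos hWcol
    rw [hWk, Nat.cast_pos] at hpos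
    exact hpos
  have hC_le : (cycleGraph n).Colorable (k - 1) := by
    obtain ⟨d⟩ := hWcolk
    have hcoloring : (cycleGraph n).Coloring {x : Fin k // x ≠ d none} :=
      SimpleGraph.Coloring.mk
        (fun i => ⟨d (some i), d.valid (wheel_adj_some_none i)⟩)
        (fun h hcc => d.valid ((wheel_adj_some_some).mpr h) (congrArg Subtype.val hcc))
    have hcard : Fintype.card {x : Fin k // x ≠ d none} = k - 1 := by
      simp [Fintype.card_subtype_compl]
    exact hcard ▸ hcoloring.colorable
  have h1 : (wheelGraph n).chromaticNumber ≤ (m : ℕ∞) + 1 := by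
    have := hW_le.chromaticNumber_le
    rwa [Nat.cast_add, Nat.cast_one] at this
  have h2 : (cycleGraph n).chromaticNumber ≤ ((k - 1 : ℕ) : ℕ∞) :=
    hC_le.chromaticNumber_le
  refine le_antisymm (by rw [hCm]; exact h1) ?_
  rw [hWk]
  calc (cycleGraph n).chromaticNumber + 1 ≤ ((k - 1 : ℕ) : ℕ∞) + 1 := by
        exact add_le_add_left h2 1
    _ = ((k - 1 + 1 : ℕ) : ℕ∞) := by push_cast; ring
    _ = (k : ℕ∞) := by rw [Nat.sub_add_cancel hk1]


/-- For every $n ≥ 3$, $ζ(W_{1,n}) = ζ(C_n)$: the chromatic completion number of the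
wheel equals that of its rim cycle. -/
theorem zeta_wheel_eq_zeta_cycle (n : ℕ) (hn : 3 ≤ n) :
    zeta (wheelGraph n) = zeta (cycleGraph n) := by
  have hχ := chromaticNumber_wheel n
  unfold zeta
  congr 1
  ext N
  constructor
  · rintro ⟨c, ⟨hproper, hcard⟩, rfl⟩
    refine ⟨c ∘ some, ⟨fun u v h => hproper (some u) (some v) h, ?_⟩,
      ncard_completionEdges_wheel n c⟩
    have hnm : c none ∉ Set.range (c ∘ some) := by
      rintro ⟨i, hi⟩
      exact (hproper (some i) none (wheel_adj_some_none i)) hi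
    have hins : Set.range c = insert (c none) (Set.range (c ∘ some)) := by
      ext x
      constructor
      · rintro ⟨o, rfl⟩
        match o with
        | none => exact Or.inl rfl
        | some i => exact Or.inr ⟨i, rfl⟩
      · rintro (rfl | ⟨i, rfl⟩)
        · exact ⟨none, rfl⟩
        · exact ⟨some i, rfl⟩
    rw [hins, Set.ncard_insert_of_notMem hnm] at hcard
    rw [hχ] at hcard
    push_cast at hcard
    exact WithTop.add_right_cancel (by simp : (1 : ℕ∞) ≠ ⊤) hcard
  · rintro ⟨c, ⟨hproper, hcard⟩, rfl⟩
    obtain ⟨k0, hk0⟩ := (Set.finite_range c).exists_notMem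
    refine ⟨fun o => o.elim k0 c, ⟨?_, ?_⟩, ?_⟩
    · rintro (_ | i) (_ | j) h
      · exact absurd h ((wheelGraph n).loopless.irrefl none)
      · exact fun he => hk0 ⟨j, he.symm⟩
      · exact fun he => hk0 ⟨i, he⟩
      · exact hproper i j h
    · have hins : Set.range (fun o : Option (Fin n) => o.elim k0 c)
          = insert k0 (Set.range c) := by
        ext x
        constructor
        · rintro ⟨o, rfl⟩
          match o with
          | none => exact Or.inl rfl
          | some i => exact Or.inr ⟨i, rfl⟩
        · rintro (rfl | ⟨i, rfl⟩)
          · exact ⟨none, rfl⟩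
          · exact ⟨some i, rfl⟩
      rw [hins, Set.ncard_insert_of_notMem hk0, hχ, ← hcard]
      push_cast
      ring
    · have : ((fun o : Option (Fin n) => o.elim k0 c) ∘ some) = c := rfl
      rw [ncard_completionEdges_wheel, this]
end
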